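/- (Abstract stability inequality for gradient flows.) Let H be a real Hilbert space, U ⊆ H open, and E : U → ℝ a Fréchet differentiable function with gradient ∇E. Let t₀ < t₁ and let u : [t₀,t₁] → U be a C¹ curve with u'(t) = -∇E(u(t)) for all t ∈ [t₀,t₁]. Suppose there exist E∞ ∈ ℝ, α ∈ (0,1) and C > 0 such that for all t ∈ [t₀,t₁] one has E(u(t)) ≥ E∞ and (E(u(t)) - E∞)^{1-α/2} ≤ C·‖∇E(u(t))‖. Then for all τ₀, τ₁ with t₀ ≤ τ₀ ≤ τ₁ ≤ t₁ one has ‖u(τ₁) - u(τ₀)‖ ≤ (2C/α)·(E(u(t₀)) - E∞)^{α/2}. -/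

import Mathlib

/-- Abstract stability inequality for gradient flows in a Hilbert space.
If `u : [t₀,t₁] → U` is a C¹ negative gradient flow trajectory of a Fréchet differentiable
function `E` on an open set `U` of a real Hilbert space, `E(u(t)) ≥ Elim`, and the
Łojasiewicz inequality `(E(u t) - Elim)^(1-α/2) ≤ C‖∇E(u t)‖` holds on `[t₀,t₁]`, then
`‖u τ₁ - u τ₀‖ ≤ (2C/α)(E(u t₀) - Elim)^(α/2)` for all `t₀ ≤ τ₀ ≤ τ₁ ≤ t₁`. -/
theorem gradient_flow_stability_inequality
    {H : Type*} [NormedAddCommGroup H] [InnerProductSpace ℝ H] [CompleteSpace H]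
    (U : Set H) (hU : IsOpen U) (E : H → ℝ)
    (hE : ∀ x ∈ U, DifferentiableAt ℝ E x)
    (t₀ t₁ : ℝ) (ht : t₀ < t₁)
    (u : ℝ → H)
    (hmem : ∀ t ∈ Set.Icc t₀ t₁, u t ∈ U)
    (hflow : ∀ t ∈ Set.Icc t₀ t₁, HasDerivAt u (-(gradient E (u t))) t)
    (hC1 : ContinuousOn (fun t => gradient E (u t)) (Set.Icc t₀ t₁))
    (Elim α C : ℝ) (hα : α ∈ Set.Ioo (0 : ℝ) 1) (hC : 0 < C)
    (hge : ∀ t ∈ Set.Icc t₀ t₁, Elim ≤ E (u t))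
    (hloj : ∀ t ∈ Set.Icc t₀ t₁,
      (E (u t) - Elim) ^ (1 - α / 2) ≤ C * ‖gradient E (u t)‖) :
    ∀ τ₀ τ₁ : ℝ, t₀ ≤ τ₀ → τ₀ ≤ τ₁ → τ₁ ≤ t₁ →
      ‖u τ₁ - u τ₀‖ ≤ (2 * C / α) * (E (u t₀) - Elim) ^ (α / 2) := by
  obtain ⟨hα0, hα1⟩ := hα
  set f : ℝ → ℝ := fun t => E (u t) - Elim with hf_def
  set g : ℝ → ℝ := fun t => (2 * C / α) * f t ^ (α / 2) with hg_def
  have hα2 : (0:ℝ) < α / 2 := by linarith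
  have hcoef : (0:ℝ) < 2 * C / α := by positivity
  -- derivative of f
  have hdf : ∀ t ∈ Set.Icc t₀ t₁,
      HasDerivAt f (-‖gradient E (u t)‖ ^ 2) t := by
    intro t htI
    have hg := (hE _ (hmem t htI)).hasGradientAt
    have hfd : HasFDerivAt E ((InnerProductSpace.toDual ℝ H) (gradient E (u t))) (u t) :=
      hg.hasFDerivAt
    have := hfd.comp_hasDerivAt t (hflow t htI)
    have heq : (InnerProductSpace.toDual ℝ H) (gradient E (u t)) (-(gradient E (u t)))
        = -‖gradient E (u t)‖ ^ 2 := by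
      rw [InnerProductSpace.toDual_apply_apply]
      simp [InnerProductSpace.toDual_apply_apply, inner_neg_right, real_inner_self_eq_norm_sq]
    rw [heq] at this
    exact this.sub_const Elim
  have hfc : ContinuousOn f (Set.Icc t₀ t₁) := fun t htI =>
    ((hdf t htI).continuousAt).continuousWithinAt
  have huc : ContinuousOn u (Set.Icc t₀ t₁) := fun t htI =>
    ((hflow t htI).continuousAt).continuousWithinAt
  have hfnn : ∀ t ∈ Set.Icc t₀ t₁, 0 ≤ f t := fun t htI => by
    have := hge t htI; simp [hf_def]; linarith
  -- f is antitone
  have hanti : AntitoneOn f (Set.Icc t₀ t₁) := by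
    apply antitoneOn_of_deriv_nonpos (convex_Icc t₀ t₁) hfc
    · intro x hx
      rw [interior_Icc] at hx
      exact (hdf x (Set.mem_Icc_of_Ioo hx)).differentiableAt.differentiableWithinAt
    · intro x hx
      rw [interior_Icc] at hx
      rw [(hdf x (Set.mem_Icc_of_Ioo hx)).deriv]
      simp only [neg_nonpos]
      positivity
  -- derivative of g at points where f ≠ 0
  have hdg : ∀ t ∈ Set.Icc t₀ t₁, f t ≠ 0 →
      HasDerivAt g (-(C * ‖gradient E (u t)‖ ^ 2 * f t ^ (α / 2 - 1))) t := by
    intro t htI hne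
    have h1 : HasDerivAt (fun s => f s ^ (α / 2))
        (-‖gradient E (u t)‖ ^ 2 * (α / 2) * f t ^ (α / 2 - 1)) t :=
      (hdf t htI).rpow_const (Or.inl hne)
    have h2 := h1.const_mul (2 * C / α)
    refine h2.congr_deriv ?_
    field_simp
  -- continuity of g
  have hgc : ContinuousOn g (Set.Icc t₀ t₁) := by
    apply ContinuousOn.const_smul (hfc.rpow_const ?_) (2 * C / α)
    intro x hx; exact Or.inr hα2.le
  have hgnn : ∀ t ∈ Set.Icc t₀ t₁, 0 ≤ g t := fun t htI => by
    have := hfnn t htI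
    have : (0:ℝ) ≤ f t ^ (α / 2) := Real.rpow_nonneg this _
    positivity
  intro τ₀ τ₁ h0 h01 h1
  have hτ₀ : τ₀ ∈ Set.Icc t₀ t₁ := ⟨h0, le_trans h01 h1⟩
  have hτ₁ : τ₁ ∈ Set.Icc t₀ t₁ := ⟨le_trans h0 h01, h1⟩
  have hsub : Set.Icc τ₀ τ₁ ⊆ Set.Icc t₀ t₁ := Set.Icc_subset_Icc h0 h1
  -- the final bound on g τ₀
  have hgfinal : g τ₀ ≤ (2 * C / α) * (E (u t₀) - Elim) ^ (α / 2) := by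
    have hle : f τ₀ ≤ f t₀ := hanti (Set.left_mem_Icc.2 ht.le) hτ₀ h0
    have := Real.rpow_le_rpow (hfnn τ₀ hτ₀) hle hα2.le
    exact mul_le_mul_of_nonneg_left this hcoef.le
  -- key lemma: length bound on [τ₀, s] when f > 0 on Ico τ₀ s
  have key : ∀ s, τ₀ ≤ s → s ≤ τ₁ → (∀ x ∈ Set.Ico τ₀ s, f x ≠ 0) →
      ‖u s - u τ₀‖ ≤ g τ₀ - g s := by
    intro s hs0 hs1 hpos
    have hsubs : Set.Icc τ₀ s ⊆ Set.Icc t₀ t₁ :=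
      Set.Icc_subset_Icc h0 (le_trans hs1 h1)
    have harg1 : ContinuousOn (fun t => u t - u τ₀) (Set.Icc τ₀ s) :=
      (huc.mono hsubs).sub continuousOn_const
    have harg2 : ∀ x ∈ Set.Ico τ₀ s,
        HasDerivWithinAt (fun t => u t - u τ₀) (-(gradient E (u x))) (Set.Ici x) x :=
      fun x hx => (((hflow x (hsubs (Set.mem_Icc_of_Ico hx))).sub_const
        (u τ₀)).hasDerivWithinAt)
    have harg3 : ‖u τ₀ - u τ₀‖ ≤ g τ₀ - g τ₀ := by simp
    have harg4 : ContinuousOn (fun t => g τ₀ - g t) (Set.Icc τ₀ s) :=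
      continuousOn_const.sub (hgc.mono hsubs)
    have harg5 : ∀ x ∈ Set.Ico τ₀ s, HasDerivWithinAt (fun t => g τ₀ - g t)
        (C * ‖gradient E (u x)‖ ^ 2 * f x ^ (α / 2 - 1)) (Set.Ici x) x := by
      intro x hx
      have hxI := hsubs (Set.mem_Icc_of_Ico hx)
      have := ((hdg x hxI (hpos x hx)).const_sub (g τ₀)).hasDerivWithinAt
        (s := Set.Ici x)
      simpa using this
    have harg6 : ∀ x ∈ Set.Ico τ₀ s,
        ‖-(gradient E (u x))‖ ≤ C * ‖gradient E (u x)‖ ^ 2 * f x ^ (α / 2 - 1) := by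
      intro x hx
      have hxI := hsubs (Set.mem_Icc_of_Ico hx)
      have hfx : 0 < f x := lt_of_le_of_ne (hfnn x hxI) (Ne.symm (hpos x hx))
      rw [norm_neg]
      rcases eq_or_ne (gradient E (u x)) 0 with hz | hz
      · simp [hz]
      · have hnz : 0 < ‖gradient E (u x)‖ := norm_pos_iff.2 hz
        have hlo := hloj x hxI
        have hpow : f x ^ (1 - α / 2) * f x ^ (α / 2 - 1) = 1 := by
          rw [← Real.rpow_add hfx]
          norm_num
        have hfp : 0 < f x ^ (α / 2 - 1) := Real.rpow_pos_of_pos hfx _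
        calc ‖gradient E (u x)‖
            = (f x ^ (1 - α / 2) * f x ^ (α / 2 - 1)) * ‖gradient E (u x)‖ := by
              rw [hpow, one_mul]
          _ ≤ (C * ‖gradient E (u x)‖ * f x ^ (α / 2 - 1)) * ‖gradient E (u x)‖ := by
              have : f x ^ (1 - α / 2) * f x ^ (α / 2 - 1)
                  ≤ C * ‖gradient E (u x)‖ * f x ^ (α / 2 - 1) :=
                mul_le_mul_of_nonneg_right hlo hfp.le
              exact mul_le_mul_of_nonneg_right this hnz.le
          _ = C * ‖gradient E (u x)‖ ^ 2 * f x ^ (α / 2 - 1) := by ring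
    have := image_norm_le_of_norm_deriv_right_le_deriv_boundary'
      harg1 harg2 harg3 harg4 harg5 harg6 (Set.right_mem_Icc.2 hs0)
    simpa using this
  by_cases hz : f τ₁ = 0
  · -- f hits zero; let s be the first zero
    set Z : Set ℝ := {t ∈ Set.Icc τ₀ τ₁ | f t = 0} with hZ_def
    have hZne : Z.Nonempty := ⟨τ₁, Set.right_mem_Icc.2 h01, hz⟩
    have hZcl : IsClosed Z := by
      have : Z = Set.Icc τ₀ τ₁ ∩ f ⁻¹' {0} := by
        ext x; simp [hZ_def]
      rw [this]
      exact ContinuousOn.preimage_isClosed_of_isClosed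
        ((hfc.mono hsub)) isClosed_Icc isClosed_singleton
    have hZcp : IsCompact Z := (isCompact_Icc (a := τ₀) (b := τ₁)).of_isClosed_subset
      hZcl (fun x hx => hx.1)
    set s := sInf Z with hs_def
    have hsZ : s ∈ Z := hZcp.sInf_mem hZne
    obtain ⟨hsI, hfs⟩ := hsZ
    have hpos : ∀ x ∈ Set.Ico τ₀ s, f x ≠ 0 := by
      intro x hx hxz
      have : s ≤ x := csInf_le hZcp.bddBelow ⟨⟨hx.1, le_trans hx.2.le hsI.2⟩, hxz⟩
      exact absurd this (not_le.2 hx.2)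
    have hkey := key s hsI.1 hsI.2 hpos
    have hgs : g s = 0 := by
      simp [hg_def, hfs, Real.zero_rpow (ne_of_gt hα2)]
    -- f is zero on [s, τ₁], so gradient vanishes there and u is constant
    have hfzero : ∀ t ∈ Set.Icc s τ₁, f t = 0 := by
      intro t htI
      have h1 : f t ≤ f s := hanti (hsub ⟨hsI.1, hsI.2⟩) (hsub ⟨le_trans hsI.1 htI.1, htI.2⟩)
        htI.1
      have h2 : 0 ≤ f t := hfnn t (hsub ⟨le_trans hsI.1 htI.1, htI.2⟩)
      linarith [hfs ▸ h1]
    have huconst : ‖u τ₁ - u s‖ ≤ 0 := by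
      rcases eq_or_lt_of_le hsI.2 with heq | hlt
      · simp [heq]
      · have hgradzero : ∀ t ∈ Set.Icc s τ₁, gradient E (u t) = 0 := by
          intro t htI
          have hmemt : t ∈ Set.Icc t₀ t₁ := hsub ⟨le_trans hsI.1 htI.1, htI.2⟩
          have hud : UniqueDiffWithinAt ℝ (Set.Icc s τ₁) t :=
            (uniqueDiffOn_Icc hlt) t htI
          have hd1 : HasDerivWithinAt f (-‖gradient E (u t)‖ ^ 2) (Set.Icc s τ₁) t :=
            (hdf t hmemt).hasDerivWithinAt
          have hd2 : HasDerivWithinAt f 0 (Set.Icc s τ₁) t := by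
            have : HasDerivWithinAt (fun _ : ℝ => (0:ℝ)) 0 (Set.Icc s τ₁) t :=
              (hasDerivWithinAt_const t _ 0)
            exact this.congr (fun y hy => hfzero y hy) (hfzero t htI)
          have := hud.eq_deriv _ hd1 hd2
          have hn : ‖gradient E (u t)‖ = 0 := by
            nlinarith [norm_nonneg (gradient E (u t))]
          exact norm_eq_zero.1 hn
        have := (convex_Icc s τ₁).norm_image_sub_le_of_norm_hasDerivWithin_le
          (f := u) (f' := fun t => -(gradient E (u t))) (C := 0)
          (fun x hx => (hflow x (hsub ⟨le_trans hsI.1 hx.1, hx.2⟩)).hasDerivWithinAt)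
          (fun x hx => by simp [hgradzero x hx])
          (Set.left_mem_Icc.2 hlt.le) (Set.right_mem_Icc.2 hlt.le)
        simpa using this
    calc ‖u τ₁ - u τ₀‖ ≤ ‖u τ₁ - u s‖ + ‖u s - u τ₀‖ := norm_sub_le_norm_sub_add_norm_sub _ _ _
      _ ≤ 0 + (g τ₀ - g s) := add_le_add huconst hkey
      _ = g τ₀ := by rw [hgs]; ring
      _ ≤ _ := hgfinal
  · -- f > 0 on the whole interval
    have hfτ₁ : 0 < f τ₁ := lt_of_le_of_ne (hfnn τ₁ hτ₁) (Ne.symm hz)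
    have hpos : ∀ x ∈ Set.Ico τ₀ τ₁, f x ≠ 0 := by
      intro x hx
      have : f τ₁ ≤ f x := hanti (hsub (Set.mem_Icc_of_Ico hx)) hτ₁ hx.2.le
      exact ne_of_gt (lt_of_lt_of_le hfτ₁ this)
    have hkey := key τ₁ h01 le_rfl hpos
    have := hgnn τ₁ hτ₁
    calc ‖u τ₁ - u τ₀‖ ≤ g τ₀ - g τ₁ := hkey
      _ ≤ g τ₀ := by linarith
      _ ≤ _ := hgfinal
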